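/- Let H be a complex Hilbert space, Q : H →L[ℂ] H self-adjoint (IsSelfAdjoint Q), and P : H →ₗ.[ℂ] H a symmetric, densely defined unbounded operator. Let D_c be a submodule of H contained in P.domain such that: (1) Q maps D_c into D_c; (2) Q (P φ) − P (Q φ) = Complex.I • φ for all φ ∈ D_c; (3) the graph {(φ, P φ) : φ ∈ D_c} is closed in H × H; (4) D_c is dense in H. Suppose P has at least one eigenvalue and the set of real eigenvalues of P, {p : ℝ | ∃ φ ∈ P.domain, φ ≠ 0 ∧ P φ = (p : ℂ) • φ}, is bounded below. Then for every β₀ : ℝ with β₀ ≠ 0, it is not the case that both β₀ and −β₀ are invariance parameters. (If P has a semibounded point spectrum, the invariance parameter set contains no nonzero symmetric pair; in particular Pauli's conclusion fails for such P.) -/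

import Mathlib

open scoped ComplexInnerProductSpace

/-- The unitary group element `U_β = exp(-(i β) Q)`. -/
noncomputable def Uop {H : Type*} [NormedAddCommGroup H] [InnerProductSpace ℂ H]
    [CompleteSpace H] (Q : H →L[ℂ] H) (β : ℝ) : H →L[ℂ] H :=
  NormedSpace.exp ((-(Complex.I * (β : ℂ))) • Q)


section
variable {H : Type*} [NormedAddCommGroup H] [InnerProductSpace ℂ H] [CompleteSpace H]

lemma Uop_hasSum (Q : H →L[ℂ] H) (β : ℝ) (ψ : H) :
    HasSum (fun n : ℕ => ((n.factorial : ℂ))⁻¹ • ((((-(Complex.I * (β : ℂ))) • Q) ^ n) ψ))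
      (Uop Q β ψ) := by
  have h := NormedSpace.exp_series_hasSum_exp' (𝕂 := ℂ) ((-(Complex.I * (β : ℂ))) • Q)
  have h2 := h.mapL (ContinuousLinearMap.apply ℂ H ψ)
  simpa [Uop] using h2

lemma Uop_star (Q : H →L[ℂ] H) (hQ : IsSelfAdjoint Q) (β : ℝ) :
    ContinuousLinearMap.adjoint (Uop Q β) = Uop Q (-β) := by
  rw [← ContinuousLinearMap.star_eq_adjoint, Uop, NormedSpace.star_exp]
  rw [Uop]
  congr 1
  rw [star_smul, hQ.star_eq]
  congr 1
  simp [Complex.ext_iff]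

lemma Uop_inv (Q : H →L[ℂ] H) (β : ℝ) (x : H) :
    Uop Q (-β) (Uop Q β x) = x := by
  have hA : (-(Complex.I * ((-β : ℝ) : ℂ))) • Q = -((-(Complex.I * (β : ℂ))) • Q) := by
    push_cast; rw [← neg_smul]; ring_nf
  have h : Uop Q (-β) * Uop Q β = 1 := by
    letI : NormedAlgebra ℚ (H →L[ℂ] H) := NormedAlgebra.restrictScalars ℚ ℂ _
    rw [Uop, Uop, hA, ← NormedSpace.exp_add_of_commute (Commute.neg_left (Commute.refl _)),
      neg_add_cancel, NormedSpace.exp_zero]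
  calc Uop Q (-β) (Uop Q β x) = (Uop Q (-β) * Uop Q β) x := rfl
    _ = x := by rw [h]; rfl

end

section
variable {H : Type*} [NormedAddCommGroup H] [InnerProductSpace ℂ H] [CompleteSpace H]

lemma key_lemma (Q : H →L[ℂ] H) (P : H →ₗ.[ℂ] H)
    (Dc : Submodule ℂ H) (hDc : Dc ≤ P.domain)
    (hQDc : ∀ φ ∈ Dc, Q φ ∈ Dc)
    (hccr : ∀ φ (hφ : φ ∈ Dc),
      Q (P ⟨φ, hDc hφ⟩) - P ⟨Q φ, hDc (hQDc φ hφ)⟩ = Complex.I • φ)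
    (hclosed : IsClosed {p : H × H | ∃ hp : p.1 ∈ Dc, P ⟨p.1, hDc hp⟩ = p.2})
    (β : ℝ) (ψ : H) (hψ : ψ ∈ Dc) :
    ∃ h : Uop Q β ψ ∈ Dc,
      P ⟨Uop Q β ψ, hDc h⟩ = Uop Q β (P ⟨ψ, hDc hψ⟩) - ((β : ℂ)) • Uop Q β ψ := by
  set c : ℂ := -(Complex.I * (β : ℂ)) with hc
  set A : H →L[ℂ] H := c • Q with hA
  set π : H := P ⟨ψ, hDc hψ⟩ with hπ
  have hpow_succ : ∀ n : ℕ, ∀ v : H, (Q ^ (n + 1)) v = Q ((Q ^ n) v) := by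
    intro n v; rw [pow_succ']; rfl
  have hQpow : ∀ n : ℕ, (Q ^ n) ψ ∈ Dc := by
    intro n; induction n with
    | zero => simpa using hψ
    | succ n ih => rw [hpow_succ]; exact hQDc _ ih
  have hPpow : ∀ n : ℕ, P ⟨(Q ^ n) ψ, hDc (hQpow n)⟩
      = (Q ^ n) π - (Complex.I * (n : ℂ)) • (Q ^ (n - 1)) ψ := by
    intro n; induction n with
    | zero =>
      have e0 : ((⟨(Q ^ 0) ψ, hDc (hQpow 0)⟩ : P.domain)) = ⟨ψ, hDc hψ⟩ :=
        Subtype.ext (by simp)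
      rw [e0]; simp [hπ]
    | succ n ih =>
      have e1 : ((⟨(Q ^ (n + 1)) ψ, hDc (hQpow (n + 1))⟩ : P.domain))
          = ⟨Q ((Q ^ n) ψ), hDc (hQDc _ (hQpow n))⟩ := Subtype.ext (hpow_succ n ψ)
      rw [e1]
      have hc2 := hccr ((Q ^ n) ψ) (hQpow n)
      have h3 : P ⟨Q ((Q ^ n) ψ), hDc (hQDc _ (hQpow n))⟩
          = Q (P ⟨(Q ^ n) ψ, hDc (hQpow n)⟩) - Complex.I • (Q ^ n) ψ := by
        rw [← hc2]; abel
      rw [h3, ih, map_sub, map_smul]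
      have hq : Q ((Q ^ n) π) = (Q ^ (n + 1)) π := (hpow_succ n π).symm
      have hq2 : (Complex.I * (n : ℂ)) • Q ((Q ^ (n - 1)) ψ)
          = (Complex.I * (n : ℂ)) • (Q ^ ((n + 1) - 1)) ψ := by
        cases n with
        | zero => simp
        | succ m => rw [← hpow_succ]; simp
      rw [hq, hq2]
      have e2 : n + 1 - 1 = n := rfl
      rw [e2, sub_sub, ← add_smul]
      congr 1
      push_cast
      ring
  -- the series terms
  set x : ℕ → H := fun n => ((n.factorial : ℂ))⁻¹ • ((A ^ n) ψ) with hxdef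
  set g : ℕ → H := fun n =>
    (((n.factorial : ℂ))⁻¹ * c ^ n * (Complex.I * (n : ℂ))) • ((Q ^ (n - 1)) ψ) with hgdef
  set y : ℕ → H := fun n => ((n.factorial : ℂ))⁻¹ • ((A ^ n) π) - g n with hydef
  have hApow : ∀ n : ℕ, ∀ v : H, (A ^ n) v = c ^ n • ((Q ^ n) v) := by
    intro n v; rw [hA, smul_pow]; rfl
  have hxeq : ∀ n : ℕ, x n = (((n.factorial : ℂ))⁻¹ * c ^ n) • ((Q ^ n) ψ) := by
    intro n; simp only [hxdef]; rw [hApow, smul_smul]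
  have hxmem : ∀ n, x n ∈ Dc := by
    intro n; rw [hxeq]; exact Dc.smul_mem _ (hQpow n)
  have hPx : ∀ n, P ⟨x n, hDc (hxmem n)⟩ = y n := by
    intro n
    have ex : ((⟨x n, hDc (hxmem n)⟩ : P.domain))
        = (((n.factorial : ℂ))⁻¹ * c ^ n) • (⟨(Q ^ n) ψ, hDc (hQpow n)⟩ : P.domain) := by
      apply Subtype.ext
      rw [Submodule.coe_smul]
      exact hxeq n
    rw [ex, P.map_smul, hPpow]
    simp only [hydef, hgdef, hxdef]
    rw [smul_sub, smul_smul, hApow, smul_smul]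
  have hxsum : HasSum x (Uop Q β ψ) := by
    simp only [hxdef, hA, hc]; exact Uop_hasSum Q β ψ
  have hπsum : HasSum (fun n => ((n.factorial : ℂ))⁻¹ • ((A ^ n) π)) (Uop Q β π) := by
    simp only [hA, hc]; exact Uop_hasSum Q β π
  have hg0 : g 0 = 0 := by simp [hgdef]
  have hcoef : ∀ m : ℕ, (((m+1).factorial : ℂ))⁻¹ * c ^ (m+1) * (Complex.I * (((m+1 : ℕ)) : ℂ))
      = (β : ℂ) * (((m.factorial : ℂ))⁻¹ * c ^ m) := by
    intro m
    have h1 : ((m.factorial : ℂ)) ≠ 0 := by exact_mod_cast m.factorial_ne_zero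
    have h2 : (((m : ℂ)) + 1) ≠ 0 := Nat.cast_add_one_ne_zero m
    have hcI : c * Complex.I = (β : ℂ) := by
      calc c * Complex.I = -(Complex.I * Complex.I * (β : ℂ)) := by rw [hc]; ring
        _ = (β : ℂ) := by rw [Complex.I_mul_I]; ring
    rw [Nat.factorial_succ, pow_succ, ← hcI]
    push_cast
    field_simp
  have hgsucc : ∀ m : ℕ, g (m + 1) = (β : ℂ) • x m := by
    intro m
    simp only [hgdef]
    rw [Nat.add_sub_cancel, hcoef, hxeq, smul_smul]
  have hgs : HasSum g ((β : ℂ) • Uop Q β ψ) := by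
    have h1 : HasSum (fun m => g (m + 1)) ((β : ℂ) • Uop Q β ψ) := by
      have h0 := hxsum.const_smul ((β : ℂ))
      simpa [hgsucc] using h0
    have h2 := (hasSum_nat_add_iff (f := g) 1).mp h1
    simpa [hg0] using h2
  have hysum : HasSum y (Uop Q β π - (β : ℂ) • Uop Q β ψ) := hπsum.sub hgs
  -- closedness argument
  have hmemS : ∀ F : Finset ℕ,
      ((∑ n ∈ F, x n, ∑ n ∈ F, y n) : H × H)
        ∈ {p : H × H | ∃ hp : p.1 ∈ Dc, P ⟨p.1, hDc hp⟩ = p.2} := by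
    intro F
    have hsx : ∑ n ∈ F, x n ∈ Dc := Submodule.sum_mem _ (fun n _ => hxmem n)
    refine ⟨hsx, ?_⟩
    have e : ((⟨∑ n ∈ F, x n, hDc hsx⟩ : P.domain))
        = ∑ n ∈ F, (⟨x n, hDc (hxmem n)⟩ : P.domain) := by
      apply Subtype.ext
      simp
    rw [e]
    rw [show (P (∑ n ∈ F, (⟨x n, hDc (hxmem n)⟩ : P.domain)))
        = P.toFun (∑ n ∈ F, (⟨x n, hDc (hxmem n)⟩ : P.domain)) from rfl, map_sum]
    exact Finset.sum_congr rfl fun n _ => hPx n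
  have ht : Filter.Tendsto (fun F : Finset ℕ => ((∑ n ∈ F, x n, ∑ n ∈ F, y n) : H × H))
      Filter.atTop (nhds (Uop Q β ψ, Uop Q β π - (β : ℂ) • Uop Q β ψ)) :=
    hxsum.prodMk_nhds hysum
  exact hclosed.mem_of_tendsto ht (Filter.Eventually.of_forall hmemS)

end

section
variable {H : Type*} [NormedAddCommGroup H] [InnerProductSpace ℂ H] [CompleteSpace H]

lemma shift_in (Q : H →L[ℂ] H) (P : H →ₗ.[ℂ] H)
    (Dc : Submodule ℂ H) (hDc : Dc ≤ P.domain)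
    (hQDc : ∀ φ ∈ Dc, Q φ ∈ Dc)
    (hccr : ∀ φ (hφ : φ ∈ Dc),
      Q (P ⟨φ, hDc hφ⟩) - P ⟨Q φ, hDc (hQDc φ hφ)⟩ = Complex.I • φ)
    (hclosed : IsClosed {p : H × H | ∃ hp : p.1 ∈ Dc, P ⟨p.1, hDc hp⟩ = p.2})
    (β p : ℝ) (ψ : H) (hψ : ψ ∈ Dc) (heig : P ⟨ψ, hDc hψ⟩ = ((p : ℂ)) • ψ) :
    ∃ h : Uop Q β ψ ∈ Dc,
      P ⟨Uop Q β ψ, hDc h⟩ = (((p - β : ℝ) : ℂ)) • Uop Q β ψ := by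
  obtain ⟨h, hk⟩ := key_lemma Q P Dc hDc hQDc hccr hclosed β ψ hψ
  refine ⟨h, ?_⟩
  rw [hk, heig, map_smul]
  push_cast
  rw [sub_smul]

lemma shift_out (Q : H →L[ℂ] H) (hQ : IsSelfAdjoint Q) (P : H →ₗ.[ℂ] H)
    (hPsymm : ∀ x y : P.domain, ⟪P x, (y : H)⟫ = ⟪(x : H), P y⟫)
    (Dc : Submodule ℂ H) (hDc : Dc ≤ P.domain)
    (hQDc : ∀ φ ∈ Dc, Q φ ∈ Dc)
    (hccr : ∀ φ (hφ : φ ∈ Dc),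
      Q (P ⟨φ, hDc hφ⟩) - P ⟨Q φ, hDc (hQDc φ hφ)⟩ = Complex.I • φ)
    (hclosed : IsClosed {p : H × H | ∃ hp : p.1 ∈ Dc, P ⟨p.1, hDc hp⟩ = p.2})
    (hDcdense : Dense (Dc : Set H))
    (β p : ℝ) (φ : H) (hφ : φ ∈ P.domain) (heig : P ⟨φ, hφ⟩ = ((p : ℂ)) • φ)
    (hU : Uop Q β φ ∈ P.domain) :
    P ⟨Uop Q β φ, hU⟩ = (((p - β : ℝ) : ℂ)) • Uop Q β φ := by
  have hzero : (P ⟨Uop Q β φ, hU⟩ : H) - (((p - β : ℝ) : ℂ)) • Uop Q β φ = 0 := by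
    apply hDcdense.eq_zero_of_inner_left ℂ
    rintro ψ hψ
    obtain ⟨h2, hkey⟩ := key_lemma Q P Dc hDc hQDc hccr hclosed (-β) ψ hψ
    set χ : H := P ⟨ψ, hDc hψ⟩ with hχ
    have hUχ : Uop Q (-β) χ
        = (P ⟨Uop Q (-β) ψ, hDc h2⟩ : H) - (β : ℂ) • Uop Q (-β) ψ := by
      rw [hkey]
      push_cast
      rw [neg_smul, sub_neg_eq_add]
      abel
    have e2 : ⟪Uop Q β φ, χ⟫ = ⟪φ, Uop Q (-β) χ⟫ := by
      rw [← Uop_star Q hQ β, ContinuousLinearMap.adjoint_inner_right]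
    have e5 : ⟪φ, (P ⟨Uop Q (-β) ψ, hDc h2⟩ : H)⟫ = ⟪((p : ℂ)) • φ, Uop Q (-β) ψ⟫ := by
      rw [← heig]
      exact (hPsymm ⟨φ, hφ⟩ ⟨Uop Q (-β) ψ, hDc h2⟩).symm
    have e7 : ⟪φ, Uop Q (-β) ψ⟫ = ⟪Uop Q β φ, ψ⟫ := by
      rw [← ContinuousLinearMap.adjoint_inner_left (Uop Q (-β)) ψ φ, Uop_star Q hQ (-β),
        neg_neg]
    have main : ⟪(P ⟨Uop Q β φ, hU⟩ : H), ψ⟫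
        = ((p : ℂ) - (β : ℂ)) * ⟪Uop Q β φ, ψ⟫ := by
      calc ⟪(P ⟨Uop Q β φ, hU⟩ : H), ψ⟫
          = ⟪Uop Q β φ, χ⟫ := hPsymm ⟨Uop Q β φ, hU⟩ ⟨ψ, hDc hψ⟩
        _ = ⟪φ, Uop Q (-β) χ⟫ := e2
        _ = ⟪φ, (P ⟨Uop Q (-β) ψ, hDc h2⟩ : H) - (β : ℂ) • Uop Q (-β) ψ⟫ := by rw [hUχ]
        _ = ⟪φ, (P ⟨Uop Q (-β) ψ, hDc h2⟩ : H)⟫ - (β : ℂ) * ⟪φ, Uop Q (-β) ψ⟫ := by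
            rw [inner_sub_right, inner_smul_right]
        _ = ⟪((p : ℂ)) • φ, Uop Q (-β) ψ⟫ - (β : ℂ) * ⟪φ, Uop Q (-β) ψ⟫ := by rw [e5]
        _ = ((p : ℂ) - (β : ℂ)) * ⟪φ, Uop Q (-β) ψ⟫ := by
            rw [inner_smul_left, Complex.conj_ofReal]; ring
        _ = ((p : ℂ) - (β : ℂ)) * ⟪Uop Q β φ, ψ⟫ := by rw [e7]
    rw [inner_sub_left, main, inner_smul_left, Complex.conj_ofReal]
    push_cast
    ring
  have := sub_eq_zero.mp hzero
  exact this

end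

/-- `β` is an invariance parameter: `U_β` maps `P.domain \ D_c` into itself. -/
def IsInvParam {H : Type*} [NormedAddCommGroup H] [InnerProductSpace ℂ H]
    [CompleteSpace H] (Q : H →L[ℂ] H) (P : H →ₗ.[ℂ] H) (Dc : Submodule ℂ H)
    (β : ℝ) : Prop :=
  ∀ φ : H, φ ∈ P.domain → φ ∉ Dc → Uop Q β φ ∈ P.domain ∧ Uop Q β φ ∉ Dc

theorem no_symmetric_invariance_pair_for_semibounded_point_spectrum
    {H : Type*} [NormedAddCommGroup H] [InnerProductSpace ℂ H] [CompleteSpace H]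
    (Q : H →L[ℂ] H) (hQ : IsSelfAdjoint Q)
    (P : H →ₗ.[ℂ] H)
    (hPsymm : ∀ x y : P.domain, ⟪P x, (y : H)⟫ = ⟪(x : H), P y⟫)
    (hPdense : Dense (P.domain : Set H))
    (Dc : Submodule ℂ H) (hDc : Dc ≤ P.domain)
    (hQDc : ∀ φ ∈ Dc, Q φ ∈ Dc)
    (hccr : ∀ φ (hφ : φ ∈ Dc),
      Q (P ⟨φ, hDc hφ⟩) - P ⟨Q φ, hDc (hQDc φ hφ)⟩ = Complex.I • φ)
    (hclosed : IsClosed {p : H × H | ∃ hp : p.1 ∈ Dc, P ⟨p.1, hDc hp⟩ = p.2})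
    (hDcdense : Dense (Dc : Set H))
    (hpoint : ∃ (φ₀ : H) (hφ₀ : φ₀ ∈ P.domain) (p₀ : ℝ),
      φ₀ ≠ 0 ∧ P ⟨φ₀, hφ₀⟩ = ((p₀ : ℂ)) • φ₀)
    (hbdd : BddBelow {p : ℝ | ∃ (φ : H) (hφ : φ ∈ P.domain),
      φ ≠ 0 ∧ P ⟨φ, hφ⟩ = ((p : ℂ)) • φ}) :
    ∀ β₀ : ℝ, β₀ ≠ 0 →
      ¬ (IsInvParam Q P Dc β₀ ∧ IsInvParam Q P Dc (-β₀)) := by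
  rintro β₀ hβ₀ ⟨h1, h2⟩
  obtain ⟨φ₀, hφ₀, p₀, hne0, heig0⟩ := hpoint
  obtain ⟨β, hβpos, hinv⟩ : ∃ β : ℝ, 0 < β ∧ IsInvParam Q P Dc β := by
    rcases hβ₀.lt_or_gt with hlt | hgt
    · exact ⟨-β₀, by linarith, h2⟩
    · exact ⟨β₀, hgt, h1⟩
  have step : ∀ (φ : H) (hφ : φ ∈ P.domain) (q : ℝ), φ ≠ 0 → P ⟨φ, hφ⟩ = ((q : ℂ)) • φ →
      ∃ (hU : Uop Q β φ ∈ P.domain), Uop Q β φ ≠ 0 ∧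
        P ⟨Uop Q β φ, hU⟩ = (((q - β : ℝ) : ℂ)) • Uop Q β φ := by
    intro φ hφ q hne heig
    have hUne : Uop Q β φ ≠ 0 := by
      intro h0
      exact hne (by rw [← Uop_inv Q β φ, h0, map_zero])
    by_cases hmem : φ ∈ Dc
    · obtain ⟨h, hk⟩ := shift_in Q P Dc hDc hQDc hccr hclosed β q φ hmem heig
      exact ⟨hDc h, hUne, hk⟩
    · obtain ⟨hU, _⟩ := hinv φ hφ hmem
      exact ⟨hU, hUne,
        shift_out Q hQ P hPsymm Dc hDc hQDc hccr hclosed hDcdense β q φ hφ heig hU⟩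
  have seq : ∀ n : ℕ, ∃ (φ : H) (hφ : φ ∈ P.domain),
      φ ≠ 0 ∧ P ⟨φ, hφ⟩ = (((p₀ - n * β : ℝ) : ℂ)) • φ := by
    intro n
    induction n with
    | zero => exact ⟨φ₀, hφ₀, hne0, by push_cast; simpa using heig0⟩
    | succ n ih =>
      obtain ⟨φ, hφ, hne, heig⟩ := ih
      obtain ⟨hU, hUne, hk⟩ := step φ hφ _ hne heig
      refine ⟨Uop Q β φ, hU, hUne, ?_⟩
      rw [hk]
      congr 2
      push_cast
      ring
  obtain ⟨b, hb⟩ := hbdd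
  obtain ⟨n, hn⟩ := exists_nat_gt ((p₀ - b) / β)
  obtain ⟨φ, hφ, hne, heig⟩ := seq n
  have hmem : (p₀ - n * β) ∈ {p : ℝ | ∃ (φ : H) (hφ : φ ∈ P.domain),
      φ ≠ 0 ∧ P ⟨φ, hφ⟩ = ((p : ℂ)) • φ} := ⟨φ, hφ, hne, heig⟩
  have hle : b ≤ p₀ - n * β := hb hmem
  rw [div_lt_iff₀ hβpos] at hn
  linarith
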